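/- arXiv:2012.15594 — 3 statements merged into one kernel-verified Lean document; each statement's English description precedes it below -/
import Mathlib

section
/- Every factor of length 2^{i+3} − 2 of the infinite Fibonacci word u contains an occurrence of the word u^{(i+3)} = ρ^{i+2}(a), for every i ≥ 0. (In particular, every factor of length 6 contains ρ(a) = ab.) -/
def rho (w : List Bool) : List Bool := w.flatMap (fun c => if c then [true, false] else [true])

def ufib : ℕ → List Bool
  | 0 => [true]
  | n + 1 => rho (ufib n)

def uinf (n : ℕ) : Bool := (ufib n).getD n true

/- ### Auxiliary lemmas -/

theorem rho_append (a b : List Bool) : rho (a ++ b) = rho a ++ rho b := by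
  simp [rho]

theorem rho_cons (c : Bool) (w : List Bool) :
    rho (c :: w) = (if c then [true, false] else [true]) ++ rho w := by simp [rho]

theorem rho_infix {l m : List Bool} (h : l <:+: m) : rho l <:+: rho m := by
  obtain ⟨x, y, rfl⟩ := h
  exact ⟨rho x, rho y, by simp [rho_append]⟩

theorem rho_length_le (l : List Bool) : (rho l).length ≤ 2 * l.length := by
  induction l with
  | nil => simp [rho]
  | cons c t ih => cases c <;> simp [rho] at * <;> omega

theorem rho_head (w : List Bool) : rho w = [] ∨ ∃ t, rho w = true :: t := by
  cases w with
  | nil => left; rfl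
  | cons c w' => right; cases c <;> simp [rho_cons]

theorem rho_no_ff (w : List Bool) : ¬ [false, false] <:+: rho w := by
  induction w with
  | nil => simp [rho]
  | cons c w' ih =>
    cases c <;> simp only [rho_cons, if_true, if_false, List.cons_append, List.nil_append] <;>
      intro h
    · rcases (List.infix_cons_iff.1 h) with h | h
      · simp [List.cons_prefix_cons] at h
      · exact ih h
    · rcases (List.infix_cons_iff.1 h) with h | h
      · simp [List.cons_prefix_cons] at h
      rcases (List.infix_cons_iff.1 h) with h | h
      · simp only [List.cons_prefix_cons] at h
        obtain ⟨-, h⟩ := h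
        rcases rho_head w' with he | ⟨t, ht⟩
        · rw [he] at h; simp at h
        · rw [ht] at h; simp [List.cons_prefix_cons] at h
      · exact ih h

theorem rho_no_ttt (w : List Bool) (hff : ¬ [false, false] <:+: w) :
    ¬ [true, true, true] <:+: rho w := by
  induction w with
  | nil => simp [rho]
  | cons c w' ih =>
    have hff' : ¬ [false, false] <:+: w' := fun h => hff (h.trans ((List.suffix_cons c w').isInfix))
    cases c <;> simp only [rho_cons, if_true, if_false, List.cons_append, List.nil_append] <;>
      intro h
    · rcases (List.infix_cons_iff.1 h) with h | h
      · rw [List.cons_prefix_cons] at h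
        obtain ⟨-, h⟩ := h
        cases w' with
        | nil => simp [rho] at h
        | cons c' w'' =>
          cases c' with
          | false => exact hff ⟨[], w'', rfl⟩
          | true => simp [rho_cons, List.cons_prefix_cons] at h
      · exact ih hff' h
    · rcases (List.infix_cons_iff.1 h) with h | h
      · simp [List.cons_prefix_cons] at h
      rcases (List.infix_cons_iff.1 h) with h | h
      · simp [List.cons_prefix_cons] at h
      · exact ih hff' h

theorem ufib_no_ff (n : ℕ) : ¬ [false, false] <:+: ufib n := by
  cases n with
  | zero => decide
  | succ m => exact rho_no_ff (ufib m)

theorem ufib_no_ttt (n : ℕ) : ¬ [true, true, true] <:+: ufib n := by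
  cases n with
  | zero => decide
  | succ m => exact rho_no_ttt (ufib m) (ufib_no_ff m)

theorem five_lemma (a b c d e : Bool)
    (h1 : ¬ [false, false] <:+: [a,b,c,d,e])
    (h2 : ¬ [true,true,true] <:+: [a,b,c,d,e]) :
    [true, false, true] <:+: [a,b,c,d,e] := by
  revert a b c d e; decide

theorem five_lemma' (l : List Bool) (hl : l.length = 5)
    (h1 : ¬ [false, false] <:+: l) (h2 : ¬ [true,true,true] <:+: l) :
    [true, false, true] <:+: l := by
  match l, hl with
  | [a,b,c,d,e], _ => exact five_lemma a b c d e h1 h2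

theorem ufib_add_two (n : ℕ) : ufib (n + 2) = ufib (n + 1) ++ ufib n := by
  induction n with
  | zero => decide
  | succ m ih =>
    show rho (ufib (m + 2)) = rho (ufib (m + 1)) ++ ufib (m + 1)
    rw [ih, rho_append]
    rfl

theorem ufib_prefix (n : ℕ) : ufib n <+: ufib (n + 1) := by
  cases n with
  | zero => decide
  | succ m => rw [ufib_add_two]; exact List.prefix_append _ _

theorem ufib_prefix_le {m n : ℕ} (h : m ≤ n) : ufib m <+: ufib n := by
  induction n with
  | zero => rw [Nat.le_zero.1 h]
  | succ k ih =>
    rcases Nat.lt_succ_iff_lt_or_eq.1 (Nat.lt_succ_of_le h) with h' | rfl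
    · exact (ih (Nat.lt_succ_iff.1 h')).trans (ufib_prefix k)
    · rfl

theorem ufib_length_pos (n : ℕ) : 0 < (ufib n).length :=
  List.length_pos_iff.2 fun h => by
    have := (ufib_prefix_le (Nat.zero_le n)).length_le
    simp [h] at this; simp [ufib] at this

theorem lt_ufib_length (n : ℕ) : n < (ufib n).length := by
  induction n with
  | zero => decide
  | succ m ih =>
    cases m with
    | zero => decide
    | succ p =>
      rw [ufib_add_two, List.length_append]
      have := ufib_length_pos p
      omega

theorem prefix_getD {l l' : List Bool} (h : l <+: l') {n : ℕ} (hn : n < l.length) :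
    l.getD n true = l'.getD n true := by
  obtain ⟨t, rfl⟩ := h
  rw [List.getD_eq_getElem _ _ hn, List.getD_eq_getElem _ _ (by simp; omega),
    List.getElem_append_left]

theorem uinf_eq {n N : ℕ} (h : n < (ufib N).length) : uinf n = (ufib N).getD n true := by
  rcases le_total n N with hle | hle
  · exact prefix_getD (ufib_prefix_le hle) (lt_ufib_length n)
  · exact (prefix_getD (ufib_prefix_le hle) h).symm

theorem segment_infix (L : List Bool) (k m : ℕ) : (L.drop k).take m <:+: L :=
  ((L.drop k).take_prefix m).isInfix.trans (L.drop_suffix k).isInfix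

theorem infix_of_segment (L A B C : List Bool) (h : L = A ++ B ++ C) (k M : ℕ)
    (h1 : k ≤ A.length) (h2 : A.length + B.length ≤ k + M) :
    B <:+: (L.drop k).take M := by
  subst h
  rw [List.append_assoc, List.drop_append]
  rw [show k - A.length = 0 by omega, List.drop_zero, ← List.append_assoc,
    List.take_append]
  have : (A.drop k ++ B).length ≤ M := by simp; omega
  rw [List.take_of_length_le this]
  exact ⟨A.drop k, C.take _, rfl⟩

def phi (w : List Bool) (j : ℕ) : ℕ := (rho (w.take j)).length

theorem phi_zero (w : List Bool) : phi w 0 = 0 := by simp [phi, rho]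

theorem phi_full (w : List Bool) {j : ℕ} (h : w.length ≤ j) : phi w j = (rho w).length := by
  rw [phi, List.take_of_length_le h]

theorem phi_succ_le (w : List Bool) (j : ℕ) : phi w (j + 1) ≤ phi w j + 2 := by
  unfold phi
  rw [List.take_succ, rho_append, List.length_append]
  have h1 : (w[j]?.toList).length ≤ 1 := by cases w[j]? <;> simp
  have := rho_length_le w[j]?.toList
  omega

theorem phi_add_le (w : List Bool) (a d : ℕ) : phi w (a + d) ≤ phi w a + 2 * d := by
  induction d with
  | zero => simp
  | succ e ih =>
    have h1 := phi_succ_le w (a + e)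
    have h2 : a + (e + 1) = (a + e) + 1 := by omega
    rw [h2]; omega

theorem main_lemma (i : ℕ) : ∀ N k : ℕ, k + (2 ^ (i + 3) - 2) ≤ (ufib N).length →
    ufib (i + 2) <:+: ((ufib N).drop k).take (2 ^ (i + 3) - 2) := by
  induction i with
  | zero =>
    intro N k h
    norm_num at h ⊢
    set W := ((ufib N).drop k).take 6 with hW
    have hWinf : W <:+: ufib N := segment_infix _ _ _
    have hW5 : W.take 5 <:+: ufib N := (W.take_prefix 5).isInfix.trans hWinf
    have hlen : (W.take 5).length = 5 := by
      simp [hW, List.length_take, List.length_drop]; omega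
    have h232 : ufib 2 = [true, false, true] := by decide
    rw [h232]
    refine (five_lemma' _ hlen (fun hc => ufib_no_ff N (hc.trans hW5))
      (fun hc => ufib_no_ttt N (hc.trans hW5))).trans (W.take_prefix 5).isInfix
  | succ i ih =>
    intro N k h
    have hpow : 2 ^ (i + 1 + 3) = 2 * 2 ^ (i + 3) := by rw [pow_succ]; ring
    have h2p : 8 ≤ 2 ^ (i + 3) := by
      calc (8 : ℕ) = 2 ^ 3 := by norm_num
      _ ≤ 2 ^ (i + 3) := Nat.pow_le_pow_right (by norm_num) (by omega)
    set m' := 2 ^ (i + 3) - 2 with hm'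
    set M := 2 ^ (i + 1 + 3) - 2 with hM
    have hMm : M = 2 * m' + 2 := by omega
    cases N with
    | zero =>
      exfalso
      have : (ufib 0).length = 1 := by decide
      omega
    | succ N' =>
      set w := ufib N' with hw
      have hrw : ufib (N' + 1) = rho w := rfl
      have hfull : k ≤ phi w w.length := by
        rw [phi_full w le_rfl, ← hrw]; omega
      have hex : ∃ j, k ≤ phi w j := ⟨w.length, hfull⟩
      set k' := Nat.find hex with hk'
      have hk1 : k ≤ phi w k' := Nat.find_spec hex
      have hk2 : phi w k' ≤ k + 1 := by
        rcases Nat.eq_zero_or_pos k' with h0 | h0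
        · rw [h0, phi_zero]; omega
        · have hmin : ¬ k ≤ phi w (k' - 1) := Nat.find_min hex (by omega)
          have := phi_succ_le w (k' - 1)
          have hss : k' - 1 + 1 = k' := by omega
          rw [hss] at this
          omega
      have hbound : k' + m' ≤ w.length := by
        by_contra hc
        push_neg at hc
        have he : phi w (k' + m') = (rho w).length := phi_full w (by omega)
        have hle : phi w (k' + m') ≤ phi w k' + 2 * m' := phi_add_le w k' m'
        rw [← hrw] at he
        omega
      have hseg := ih N' k' (by rw [← hw]; omega)
      rw [← hw] at hseg
      set seg := (w.drop k').take m' with hseg_def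
      -- decomposition
      have hdec : ufib (N' + 1) = rho (w.take k') ++ rho seg ++ rho (w.drop (k' + m')) := by
        rw [hrw, ← rho_append, ← rho_append]
        congr 1
        rw [List.append_assoc, hseg_def]
        rw [show w.drop (k' + m') = (w.drop k').drop m' by rw [List.drop_drop]; try ring_nf]
        rw [List.take_append_drop, List.take_append_drop]
      have hA : (rho (w.take k')).length = phi w k' := rfl
      have hBlen : (rho seg).length ≤ 2 * m' := by
        have h1 : seg.length ≤ m' := by simp [hseg_def]
        have := rho_length_le seg
        omega
      have hmain := infix_of_segment (ufib (N' + 1)) _ _ _ hdec k M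
        (by rw [hA]; omega) (by rw [hA]; omega)
      have : ufib (i + 1 + 2) = rho (ufib (i + 2)) := rfl
      rw [this]
      exact (rho_infix hseg).trans hmain

/-- Every factor of length 2^{i+3} − 2 of the infinite Fibonacci word contains an occurrence
of the word u^{(i+3)} = ρ^{i+2}(a) (here `ufib (i+2)`), for every i ≥ 0. -/
theorem factor_contains_ufib (i k : ℕ) :
    ufib (i + 2) <:+: List.ofFn (fun j : Fin (2 ^ (i + 3) - 2) => uinf (k + (j : ℕ))) := by
  set m := 2 ^ (i + 3) - 2 with hm
  set N := k + 2 ^ (i + 3) with hN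
  have hlen : k + m ≤ (ufib N).length := by
    have := lt_ufib_length N
    have h2 : 2 ≤ 2 ^ (i + 3) := by
      calc (2 : ℕ) = 2 ^ 1 := by norm_num
      _ ≤ 2 ^ (i + 3) := Nat.pow_le_pow_right (by norm_num) (by omega)
    omega
  have hofn : List.ofFn (fun j : Fin m => uinf (k + (j : ℕ))) = ((ufib N).drop k).take m := by
    apply List.ext_getElem
    · simp [List.length_take, List.length_drop]
      omega
    · intro n h1 h2
      simp only [List.getElem_ofFn, List.getElem_take, List.getElem_drop]
      rw [uinf_eq (N := N) (by simp at h1; omega), List.getD_eq_getElem]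
    -- done
  rw [hofn]
  exact main_lemma i N k hlen
end

section
/- For x ≥ 0 not covered by the initial interval [0,τ), there exist finitely many positive integers n₁ > n₂ > ⋯ > n_r ≥ 1 such that 0 ≤ x − τ^{n₁} − τ^{n₂} − ⋯ − τ^{n_r} < τ, where τ = (1+√5)/2 (a greedy Zeckendorf-type expansion in powers of τ). -/
noncomputable def tau : ℝ := (1 + Real.sqrt 5) / 2

lemma tau_pos : (0:ℝ) < tau := by
  have := Real.sqrt_nonneg 5
  unfold tau; linarith

lemma one_lt_tau : (1:ℝ) < tau := by
  have h := Real.sq_sqrt (by norm_num : (0:ℝ) ≤ 5)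
  have := Real.sqrt_nonneg 5
  unfold tau; nlinarith

lemma tau_sq : tau ^ 2 = tau + 1 := by
  have h := Real.sq_sqrt (by norm_num : (0:ℝ) ≤ 5)
  unfold tau; nlinarith

lemma tau_aux : ∀ n : ℕ, ∀ x : ℝ, tau ≤ x → x < tau ^ (n+1) →
    ∃ l : List ℕ, l ≠ [] ∧ l.Chain' (· > ·) ∧ (∀ m ∈ l, 1 ≤ m ∧ m ≤ n) ∧
      0 ≤ x - (l.map (fun m => tau ^ m)).sum ∧
      x - (l.map (fun m => tau ^ m)).sum < tau := by
  intro n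
  induction n with
  | zero =>
    intro x hx h
    simp at h
    linarith
  | succ n ih =>
    intro x hx h
    by_cases hc : x < tau ^ (n+1)
    · obtain ⟨l, h1, h2, h3, h4, h5⟩ := ih x hx hc
      exact ⟨l, h1, h2, fun m hm => ⟨(h3 m hm).1, le_trans (h3 m hm).2 (Nat.le_succ n)⟩, h4, h5⟩
    · push_neg at hc
      have hy0 : 0 ≤ x - tau ^ (n+1) := by linarith
      have key : tau ^ (n+1+1) = tau ^ (n+1) + tau ^ n := by
        have h2 := tau_sq
        calc tau ^ (n+1+1) = tau ^ n * tau ^ 2 := by ring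
          _ = tau ^ n * (tau + 1) := by rw [h2]
          _ = tau ^ (n+1) + tau ^ n := by ring
      have hyub : x - tau ^ (n+1) < tau ^ n := by linarith
      by_cases hs : x - tau ^ (n+1) < tau
      · refine ⟨[n+1], by simp, List.isChain_singleton _, ?_, ?_, ?_⟩
        · intro m hm; simp at hm; omega
        · simpa using hy0
        · simpa using hs
      · push_neg at hs
        have hmono : tau ^ n ≤ tau ^ (n+1) :=
          pow_le_pow_right₀ one_lt_tau.le (Nat.le_succ n)
        obtain ⟨l, h1, h2, h3, h4, h5⟩ := ih (x - tau ^ (n+1)) hs (by linarith)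
        refine ⟨(n+1) :: l, by simp, ?_, ?_, ?_, ?_⟩
        · refine List.isChain_cons.mpr ⟨?_, h2⟩
          intro b hb
          have := (h3 b (List.mem_of_mem_head? hb)).2
          omega
        · intro m hm
          rcases List.mem_cons.mp hm with h | h
          · omega
          · exact ⟨(h3 m h).1, le_trans (h3 m h).2 (Nat.le_succ n)⟩
        · simp only [List.map_cons, List.sum_cons]
          linarith
        · simp only [List.map_cons, List.sum_cons]
          linarith

/-- Greedy Zeckendorf-type expansion in powers of τ: every x ≥ τ admits strictly decreasing
positive integer exponents n₁ > ⋯ > n_r ≥ 1 with 0 ≤ x − τ^{n₁} − ⋯ − τ^{n_r} < τ. -/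
theorem greedy_tau_expansion (x : ℝ) (hx : tau ≤ x) :
    ∃ l : List ℕ, l ≠ [] ∧ l.Chain' (· > ·) ∧ (∀ m ∈ l, 1 ≤ m) ∧
      0 ≤ x - (l.map (fun m => tau ^ m)).sum ∧
      x - (l.map (fun m => tau ^ m)).sum < tau := by
  obtain ⟨n, hn⟩ := pow_unbounded_of_one_lt x one_lt_tau
  have hmono : tau ^ n ≤ tau ^ (n+1) :=
    pow_le_pow_right₀ one_lt_tau.le (Nat.le_succ n)
  obtain ⟨l, h1, h2, h3, h4, h5⟩ := tau_aux n x hx (by linarith)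
  exact ⟨l, h1, h2, fun m hm => (h3 m hm).1, h4, h5⟩
end

section
/- Let V be C² near each of its local maxima with V''(p) = ζ''(0) < 0 at each maximum p, and suppose λ > −4/ζ''(0). If u ∈ ℝ^ℤ is an equilibrium configuration for H_λ(ξ,η) = ½(ξ−η)² + λV(ξ) (i.e., u_{i+1} − 2u_i + u_{i-1} = λ V'(u_i) for all i) with some u_{i₀} in the strictly quadratic part of V near a maximum g(i₀) and u_{i₀} ≠ g(i₀), then writing ū = (u_{i₀−1} + u_{i₀+1})/2, the sign of u_{i₀} − g(i₀) is opposite to the sign of ū − g(i₀), and |u_{i₀} − g(i₀)| < |ū − g(i₀)| < |ū − u_{i₀}|. -/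
/-- Near a local maximum g₀ of V where V'(u_{i₀}) = c·(u_{i₀} − g₀) with c = ζ''(0) < 0, if
λ > −4/c and u is an equilibrium configuration for H_λ with u_{i₀} ≠ g₀, then with
ū = (u_{i₀−1} + u_{i₀+1})/2 the signs of u_{i₀} − g₀ and ū − g₀ are opposite, and
|u_{i₀} − g₀| < |ū − g₀| < |ū − u_{i₀}|. -/
theorem nonminimal_inequalities (c lam : ℝ) (hc : c < 0) (hlam : lam > -4 / c)
    (V' : ℝ → ℝ) (u : ℤ → ℝ) (i₀ : ℤ) (g0 : ℝ)
    (heq : ∀ i : ℤ, u (i + 1) - 2 * u i + u (i - 1) = lam * V' (u i))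
    (hTaylor : V' (u i₀) = c * (u i₀ - g0))
    (hne : u i₀ ≠ g0) :
    (u i₀ - g0) * ((u (i₀ - 1) + u (i₀ + 1)) / 2 - g0) < 0 ∧
    |u i₀ - g0| < |(u (i₀ - 1) + u (i₀ + 1)) / 2 - g0| ∧
    |(u (i₀ - 1) + u (i₀ + 1)) / 2 - g0| < |(u (i₀ - 1) + u (i₀ + 1)) / 2 - u i₀| := by
  have hk : lam * c < -4 := by
    have h := mul_lt_mul_of_neg_right hlam hc
    rw [div_mul_cancel₀] at h
    · linarith
    · exact ne_of_lt hc
  set d : ℝ := u i₀ - g0 with hd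
  have hdne : d ≠ 0 := sub_ne_zero.mpr hne
  have heq0 := heq i₀
  rw [hTaylor] at heq0
  set k : ℝ := 1 + lam * c / 2 with hkdef
  have hkneg : k < -1 := by simp only [hkdef]; linarith
  have h1 : (u (i₀ - 1) + u (i₀ + 1)) / 2 - g0 = k * d := by
    simp only [hkdef, hd]; linear_combination heq0 / 2
  have h2 : (u (i₀ - 1) + u (i₀ + 1)) / 2 - u i₀ = (k - 1) * d := by
    simp only [hkdef, hd]; linear_combination heq0 / 2
  rw [h1, h2]
  have hdsq : 0 < d ^ 2 := by positivity
  refine ⟨by nlinarith, ?_, ?_⟩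
  · rw [abs_mul]
    have h3 : 1 < |k| := by rw [abs_of_neg (by linarith)]; linarith
    have h4 : 0 < |d| := abs_pos.mpr hdne
    nlinarith
  · rw [abs_mul, abs_mul]
    have h3 : |k| < |k - 1| := by
      rw [abs_of_neg (by linarith), abs_of_neg (by linarith)]; linarith
    have h4 : 0 < |d| := abs_pos.mpr hdne
    nlinarith
end
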